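/- Let X be a finite set. Every commutative nilpotent subsemigroup of T(X) of maximum possible cardinality (among all commutative nilpotent subsemigroups of T(X)) is a null semigroup, i.e., satisfies S² = {e} where e is its zero. -/

import Mathlib

/-- `S` is a subsemigroup of the full transformation semigroup on `X`
(maps act on the right, so the product `β·γ` is `γ ∘ β`). -/
def IsTransSub {X : Type*} (S : Set (X → X)) : Prop :=
  ∀ β ∈ S, ∀ γ ∈ S, (γ ∘ β) ∈ S

/-- `e` is a zero element of `S`: `βe = eβ = e` for all `β ∈ S`. -/
def IsZeroElem {X : Type*} (S : Set (X → X)) (e : X → X) : Prop :=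
  e ∈ S ∧ ∀ β ∈ S, e ∘ β = e ∧ β ∘ e = e

/-- `S` is nilpotent with zero `e`: some `m ≥ 1` such that every product of
`m` elements of `S` equals `e`. -/
def IsNilpotentSub {X : Type*} (S : Set (X → X)) (e : X → X) : Prop :=
  ∃ m : ℕ, 0 < m ∧ ∀ L : List (X → X), L.length = m → (∀ f ∈ L, f ∈ S) →
    L.foldr (· ∘ ·) id = e

/-- `S` is commutative. -/
def IsCommSub {X : Type*} (S : Set (X → X)) : Prop :=
  ∀ β ∈ S, ∀ γ ∈ S, β ∘ γ = γ ∘ β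

/-- `S` is a null semigroup with zero `e`: every product of two elements is `e`. -/
def IsNullSub {X : Type*} (S : Set (X → X)) (e : X → X) : Prop :=
  ∀ β ∈ S, ∀ γ ∈ S, γ ∘ β = e

/-- `ξ(n) = max { t ^ (n - t) : 1 ≤ t ≤ n }`. -/
def xi (n : ℕ) : ℕ := (Finset.Icc 1 n).sup (fun t => t ^ (n - t))

/-- `α(n) = max { t ∈ {1,…,n} : t ^ (n - t) = ξ(n) }`. -/
def alphaMax (n : ℕ) : ℕ :=
  ((Finset.Icc 1 n).filter (fun t => t ^ (n - t) = xi n)).sup id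

/- ### Auxiliary lemmas -/

lemma my_listProd_mem {X : Type*} {S : Set (X → X)} (hS : IsTransSub S) :
    ∀ (L : List (X → X)), L ≠ [] → (∀ f ∈ L, f ∈ S) → L.foldr (· ∘ ·) id ∈ S := by
  intro L
  induction L with
  | nil => intro h _; exact absurd rfl h
  | cons a L ih =>
    intro _ hmem
    rcases eq_or_ne L [] with rfl | hL
    · simpa using hmem a (by simp)
    · have h1 : a ∈ S := hmem a (by simp)
      have h2 : L.foldr (· ∘ ·) id ∈ S := ih hL (fun f hf => hmem f (List.mem_cons_of_mem _ hf))
      exact hS _ h2 _ h1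

lemma my_comm_listProd {X : Type*} {S : Set (X → X)} (hcomm : IsCommSub S)
    {β : X → X} (hβ : β ∈ S) :
    ∀ (L : List (X → X)), (∀ f ∈ L, f ∈ S) →
      β ∘ L.foldr (· ∘ ·) id = L.foldr (· ∘ ·) id ∘ β := by
  intro L
  induction L with
  | nil => intro _; rfl
  | cons a L ih =>
    intro hmem
    have ha : a ∈ S := hmem a (by simp)
    have hL := ih (fun f hf => hmem f (List.mem_cons_of_mem _ hf))
    show β ∘ (a ∘ L.foldr (· ∘ ·) id) = (a ∘ L.foldr (· ∘ ·) id) ∘ β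
    calc β ∘ (a ∘ L.foldr (· ∘ ·) id) = (β ∘ a) ∘ L.foldr (· ∘ ·) id := rfl
    _ = (a ∘ β) ∘ L.foldr (· ∘ ·) id := by rw [hcomm β hβ a ha]
    _ = a ∘ (β ∘ L.foldr (· ∘ ·) id) := rfl
    _ = a ∘ (L.foldr (· ∘ ·) id ∘ β) := by rw [hL]

lemma my_listProd_append {X : Type*} (L₁ L₂ : List (X → X)) :
    (L₁ ++ L₂).foldr (· ∘ ·) id = L₁.foldr (· ∘ ·) id ∘ L₂.foldr (· ∘ ·) id := by
  induction L₁ with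
  | nil => rfl
  | cons a L ih =>
    rw [List.cons_append, List.foldr_cons, List.foldr_cons, ih]
    rfl

/-- the union of the images of all members of `S` -/
def imSet {X : Type*} (S : Set (X → X)) : Set X := ⋃ β ∈ S, Set.range β

lemma mem_imSet_iff {X : Type*} {S : Set (X → X)} {x : X} :
    x ∈ imSet S ↔ ∃ β ∈ S, ∃ y, β y = x := by
  simp [imSet, Set.mem_iUnion, Set.mem_range]

/-- A member of a commutative nilpotent subsemigroup is determined by its values
outside `imSet S`. -/
lemma my_eq_of_eqOn_compl_imSet {X : Type*} {S : Set (X → X)}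
    (hcomm : IsCommSub S) {e : X → X} (he : IsZeroElem S e) (hnil : IsNilpotentSub S e)
    {β₁ β₂ : X → X} (hb1 : β₁ ∈ S) (hb2 : β₂ ∈ S)
    (h : ∀ x, x ∉ imSet S → β₁ x = β₂ x) : β₁ = β₂ := by
  obtain ⟨m, hm, hprod⟩ := hnil
  have key : ∀ k, ∀ L : List (X → X), L ≠ [] → (∀ f ∈ L, f ∈ S) → m ≤ L.length + k →
      ∀ x, β₁ (L.foldr (· ∘ ·) id x) = β₂ (L.foldr (· ∘ ·) id x) := by
    intro k
    induction k with
    | zero =>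
      intro L hL hmem hlen x
      have hsplit : L = L.take m ++ L.drop m := (List.take_append_drop m L).symm
      have hlen' : (L.take m).length = m := by
        rw [List.length_take]; omega
      have hp : (L.take m).foldr (· ∘ ·) id = e :=
        hprod _ hlen' (fun f hf => hmem f (List.mem_of_mem_take hf))
      have : L.foldr (· ∘ ·) id x = e ((L.drop m).foldr (· ∘ ·) id x) := by
        conv_lhs => rw [hsplit]
        rw [my_listProd_append, hp]; rfl
      rw [this]
      have h1 : β₁ ∘ e = e := (he.2 β₁ hb1).2
      have h2 : β₂ ∘ e = e := (he.2 β₂ hb2).2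
      calc β₁ (e _) = (β₁ ∘ e) _ := rfl
        _ = e _ := by rw [h1]
        _ = (β₂ ∘ e) _ := by rw [h2]
        _ = β₂ (e _) := rfl
    | succ k ih =>
      intro L hL hmem hlen x
      by_cases hx : x ∈ imSet S
      · obtain ⟨δ, hδ, z, hz⟩ := mem_imSet_iff.mp hx
        have hmem' : ∀ f ∈ L ++ [δ], f ∈ S := by
          intro f hf
          rcases List.mem_append.mp hf with hf | hf
          · exact hmem f hf
          · simp at hf; subst hf; exact hδ
        have := ih (L ++ [δ]) (by simp) hmem' (by simp; omega) z
        have heq : (L ++ [δ]).foldr (· ∘ ·) id z = L.foldr (· ∘ ·) id x := by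
          rw [my_listProd_append]
          show L.foldr (· ∘ ·) id ((δ ∘ id) z) = _
          simp [hz]
        rwa [heq] at this
      · have hx' := h x hx
        have c1 := my_comm_listProd hcomm hb1 L hmem
        have c2 := my_comm_listProd hcomm hb2 L hmem
        calc β₁ (L.foldr (· ∘ ·) id x) = (β₁ ∘ L.foldr (· ∘ ·) id) x := rfl
          _ = (L.foldr (· ∘ ·) id ∘ β₁) x := by rw [c1]
          _ = L.foldr (· ∘ ·) id (β₁ x) := rfl
          _ = L.foldr (· ∘ ·) id (β₂ x) := by rw [hx']
          _ = (L.foldr (· ∘ ·) id ∘ β₂) x := rfl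
          _ = (β₂ ∘ L.foldr (· ∘ ·) id) x := by rw [c2]
          _ = _ := rfl
  funext x
  by_cases hx : x ∈ imSet S
  · obtain ⟨δ, hδ, z, hz⟩ := mem_imSet_iff.mp hx
    have := key (m - 1) [δ] (by simp) (by simpa using hδ) (by simp; omega) z
    simpa [hz] using this
  · exact h x hx

lemma my_null_family_exists {X : Type*} [Fintype X] (Y : Finset X) (y0 : X) (hy0 : y0 ∈ Y) :
    ∃ (T : Set (X → X)) (f : X → X), IsTransSub T ∧ IsCommSub T ∧ IsZeroElem T f ∧
      IsNilpotentSub T f ∧ T.ncard = Y.card ^ (Fintype.card X - Y.card) := by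
  classical
  set T : Set (X → X) := {f | (∀ y ∈ Y, f y = y0) ∧ ∀ x, f x ∈ Y} with hT
  set f0 : X → X := fun _ => y0 with hf0
  have hf0T : f0 ∈ T := ⟨fun _ _ => rfl, fun _ => hy0⟩
  have hprod : ∀ β ∈ T, ∀ γ ∈ T, γ ∘ β = f0 := by
    intro β hβ γ hγ
    funext x
    exact hγ.1 (β x) (hβ.2 x)
  refine ⟨T, f0, ?_, ?_, ?_, ?_, ?_⟩
  · intro β hβ γ hγ
    rw [hprod β hβ γ hγ]; exact hf0T
  · intro β hβ γ hγ
    rw [hprod β hβ γ hγ, hprod γ hγ β hβ]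
  · refine ⟨hf0T, fun β hβ => ⟨?_, ?_⟩⟩
    · exact hprod β hβ f0 hf0T
    · exact hprod f0 hf0T β hβ
  · refine ⟨2, by norm_num, ?_⟩
    intro L hlen hmem
    match L, hlen with
    | [β, γ], _ =>
      have : (β ∘ (γ ∘ id)) = β ∘ γ := rfl
      show β ∘ (γ ∘ id) = f0
      rw [this, hprod γ (hmem γ (by simp)) β (hmem β (by simp))]
  · have eqv : ↥T ≃ ({x : X // x ∉ Y} → ↥Y) :=
      { toFun := fun f x => ⟨f.1 x.1, f.2.2 x.1⟩
        invFun := fun g => ⟨fun x => if hx : x ∈ Y then y0 else (g ⟨x, hx⟩ : X),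
          ⟨fun y hy => by simp [hy], fun x => by
            by_cases hx : x ∈ Y
            · simp [hx, hy0]
            · simp only [hx, dif_neg, not_false_iff]
              exact (g ⟨x, hx⟩).2⟩⟩
        left_inv := fun f => Subtype.ext (funext fun x => by
          by_cases hx : x ∈ Y
          · simp [hx, f.2.1 x hx]
          · simp [hx])
        right_inv := fun g => funext fun x => Subtype.ext (by simp [x.2]) }
    have h1 : T.ncard = Nat.card ↥T := (Nat.card_coe_set_eq T).symm
    rw [h1, Nat.card_congr eqv, Nat.card_fun, Nat.card_eq_fintype_card,
      Nat.card_eq_fintype_card, Fintype.card_coe, Fintype.card_subtype_compl,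
      Fintype.card_coe]

lemma my_small_null {X : Type*} [Fintype X] {S : Set (X → X)} {e : X → X}
    (hS : IsTransSub S) (he : IsZeroElem S e) (hnil : IsNilpotentSub S e)
    (hcard : S.ncard ≤ 2) : IsNullSub S e := by
  classical
  obtain ⟨m, hm, hprod⟩ := hnil
  have hsq : ∀ β ∈ S, β ∘ β = β → β = e := by
    intro β hβ hidem
    have hrep : ∀ k, (List.replicate (k+1) β).foldr (· ∘ ·) id = β := by
      intro k; induction k with
      | zero => simp
      | succ k ih =>
        rw [List.replicate_succ, List.foldr_cons, ih, hidem]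
    have heq := hprod (List.replicate m β) (by simp)
      (fun f hf => by rw [List.eq_of_mem_replicate hf]; exact hβ)
    obtain ⟨k, rfl⟩ : ∃ k, m = k + 1 := ⟨m - 1, by omega⟩
    rw [hrep k] at heq; exact heq
  have htriple : ∀ a b : X → X, a ∈ S → b ∈ S → a ≠ e → b ≠ e → a = b := by
    intro a b ha hb hae hbe
    by_contra hab
    have hsub : ({e, a, b} : Set (X → X)) ⊆ S := by
      intro x hx
      rcases hx with rfl | rfl | rfl
      · exact he.1
      · exact ha
      · exact hb
    have h3 : ({e, a, b} : Set (X → X)).ncard = 3 := by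
      rw [Set.ncard_insert_of_notMem (by simp [Ne.symm hae, Ne.symm hbe]),
        Set.ncard_pair hab]
    have hle := Set.ncard_le_ncard hsub (Set.toFinite S)
    omega
  have key : ∀ β ∈ S, β ∘ β = e := by
    intro β hβ
    have hββ : β ∘ β ∈ S := hS β hβ β hβ
    by_cases hb : β = e
    · rw [hb]; exact (he.2 e he.1).1
    by_cases hbb : β ∘ β = e
    · exact hbb
    · have : β ∘ β = β := htriple _ _ hββ hβ hbb hb
      exact absurd (hsq β hβ this) hb
  intro β hβ γ hγ
  by_cases hb : β = e
  · rw [hb]; exact (he.2 γ hγ).2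
  by_cases hg : γ = e
  · rw [hg]; exact (he.2 β hβ).1
  · rw [htriple γ β hγ hβ hg hb]
    exact key β hβ

lemma my_arith : ∀ k : ℕ, k + 3 < 2 ^ (k + 2) := by
  intro k
  induction k with
  | zero => norm_num
  | succ k ih =>
    have : 2 ^ (k + 1 + 2) = 2 ^ (k + 2) * 2 := by ring
    omega

theorem stmt12 {X : Type*} [Fintype X]
    (S : Set (X → X)) (hS : IsTransSub S) (hcomm : IsCommSub S)
    (e : X → X) (he : IsZeroElem S e) (hnil : IsNilpotentSub S e)
    (hmax : ∀ (T : Set (X → X)) (f : X → X),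
      IsTransSub T → IsCommSub T → IsZeroElem T f → IsNilpotentSub T f →
      T.ncard ≤ S.ncard) :
    IsNullSub S e := by
  classical
  rcases isEmpty_or_nonempty X with hE | hNE
  · intro β hβ γ hγ
    funext x
    exact (hE.false x).elim
  by_cases hsmall : S.ncard ≤ 2
  · exact my_small_null hS he hnil hsmall
  push_neg at hsmall
  set n := Fintype.card X with hn_def
  have hn : 1 ≤ n := Fintype.card_pos
  -- Step 1 : xi n ≤ S.ncard
  obtain ⟨t, htmem, htxi⟩ := Finset.exists_mem_eq_sup (Finset.Icc 1 n)
    (by rw [Finset.nonempty_Icc]; omega) (fun t => t ^ (n - t))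
  obtain ⟨ht1, htn⟩ := Finset.mem_Icc.mp htmem
  obtain ⟨Y, hYsub, hYcard⟩ := Finset.exists_subset_card_eq (s := Finset.univ) (n := t)
    (by simpa using htn)
  obtain ⟨y0, hy0⟩ := Finset.card_pos.mp (by rw [hYcard]; omega)
  obtain ⟨T, f, hT1, hT2, hT3, hT4, hT5⟩ := my_null_family_exists Y y0 hy0
  have hxiS : xi n ≤ S.ncard := by
    have hle := hmax T f hT1 hT2 hT3 hT4
    rw [hT5, hYcard] at hle
    calc xi n = t ^ (n - t) := htxi
      _ ≤ S.ncard := hle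
  -- Step 2 : the injection into A^R
  set A := imSet S with hA_def
  have hA : ∀ β ∈ S, ∀ x, β x ∈ A := fun β hβ x => mem_imSet_iff.mpr ⟨β, hβ, x, rfl⟩
  set R := Aᶜ with hR_def
  set a := A.ncard with ha_def
  set r := R.ncard with hr_def
  have hNatA : Nat.card ↥A = a := Nat.card_coe_set_eq A
  have hNatR : Nat.card ↥R = r := Nat.card_coe_set_eq R
  have har : a + r = n := by
    have := Set.ncard_add_ncard_compl A
    rwa [Nat.card_eq_fintype_card] at this
  have ha1 : 1 ≤ a := by
    have hx0 : ∃ x : X, True := ⟨Classical.arbitrary X, trivial⟩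
    obtain ⟨x0, -⟩ := hx0
    have : e x0 ∈ A := hA e he.1 x0
    have : A.Nonempty := ⟨e x0, this⟩
    have := Set.ncard_pos (Set.toFinite A) |>.mpr this
    omega
  set Ψ : ↥S → (↥R → ↥A) := fun β rr => ⟨β.1 rr.1, hA β.1 β.2 rr.1⟩ with hΨ_def
  have hΨinj : Function.Injective Ψ := by
    intro β₁ β₂ hΨeq
    apply Subtype.ext
    apply my_eq_of_eqOn_compl_imSet hcomm he hnil β₁.2 β₂.2
    intro x hx
    have hxR : x ∈ R := Set.mem_compl hx
    have := congr_fun hΨeq ⟨x, hxR⟩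
    exact Subtype.ext_iff.mp this
  have hcard_fun : Nat.card (↥R → ↥A) = a ^ r := by
    rw [Nat.card_fun, hNatA, hNatR]
  have hcard_le : S.ncard ≤ a ^ r := by
    have := Nat.card_le_card_of_injective Ψ hΨinj
    rwa [hcard_fun, Nat.card_coe_set_eq] at this
  have hr_eq : r = n - a := by omega
  have hle_xi : a ^ r ≤ xi n := by
    rw [hr_eq]
    have hmem2 : a ∈ Finset.Icc 1 n := Finset.mem_Icc.mpr ⟨ha1, by omega⟩
    exact Finset.le_sup (f := fun t => t ^ (n - t)) hmem2
  have hSar : S.ncard = a ^ r := le_antisymm hcard_le (hle_xi.trans hxiS)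
  -- Step 3 : r ≥ 2
  have hr2 : 2 ≤ r := by
    by_contra hr
    push_neg at hr
    interval_cases r
    · rw [pow_zero] at hSar; omega
    · -- r = 1 : S.ncard = a = n - 1, n ≥ 4, but xi n ≥ 2^(n-2) > n - 1
      rw [pow_one] at hSar
      have hn4 : 4 ≤ n := by omega
      have h2xi : 2 ^ (n - 2) ≤ xi n := by
        have h2m : (2 : ℕ) ∈ Finset.Icc 1 n := Finset.mem_Icc.mpr ⟨by omega, by omega⟩
        exact Finset.le_sup (f := fun t => t ^ (n - t)) h2m
      have harith : n - 1 < 2 ^ (n - 2) := by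
        obtain ⟨k, hk⟩ : ∃ k, n = k + 4 := ⟨n - 4, by omega⟩
        have hh := my_arith k
        have e1 : n - 1 = k + 3 := by omega
        have e2 : n - 2 = k + 2 := by omega
        rw [e1, e2]; exact hh
      omega
  -- Step 4 : surjectivity
  have hbij : Function.Bijective Ψ := by
    rw [Nat.bijective_iff_injective_and_card]
    refine ⟨hΨinj, ?_⟩
    rw [hcard_fun, Nat.card_coe_set_eq]
    exact hSar
  have hsurj : ∀ c : ↥R → ↥A, ∃ β ∈ S, ∀ rr : ↥R, β rr.1 = (c rr).1 := by
    intro c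
    obtain ⟨β, hβ⟩ := hbij.2 c
    exact ⟨β.1, β.2, fun rr => by rw [← hβ]⟩
  obtain ⟨r0, r1, hne⟩ : ∃ r0 r1 : ↥R, r0 ≠ r1 := by
    have : Nontrivial ↥R := by
      apply Finite.one_lt_card_iff_nontrivial.mp
      rw [hNatR]; omega
    exact exists_pair_ne ↥R
  -- Step A
  have stepA : ∀ (β β' : X → X), β ∈ S → β' ∈ S → β r0.1 = β' r0.1 →
      ∀ u ∈ A, β u = β' u := by
    intro β β' hβ hβ' hval u hu
    obtain ⟨δ, hδ, hδr⟩ := hsurj (fun _ => ⟨u, hu⟩)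
    have hδr0 : δ r0.1 = u := hδr r0
    calc β u = β (δ r0.1) := by rw [hδr0]
      _ = δ (β r0.1) := congr_fun (hcomm β hβ δ hδ) r0.1
      _ = δ (β' r0.1) := by rw [hval]
      _ = β' (δ r0.1) := (congr_fun (hcomm β' hβ' δ hδ) r0.1).symm
      _ = β' u := by rw [hδr0]
  -- Main computation
  have main : ∀ γ ∈ S, ∀ u ∈ A, γ u = e u := by
    intro γ hγ u hu
    obtain ⟨β₁, hβ₁, hβ₁r⟩ := hsurj (fun rr =>
      if rr = r0 then ⟨γ r0.1, hA γ hγ r0.1⟩ else ⟨e r1.1, hA e he.1 r1.1⟩)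
    have hb10 : β₁ r0.1 = γ r0.1 := by
      have := hβ₁r r0; simpa using this
    have hb11 : β₁ r1.1 = e r1.1 := by
      have := hβ₁r r1; simpa [Ne.symm hne] using this
    obtain ⟨δ, hδ, hδr⟩ := hsurj (fun _ => ⟨u, hu⟩)
    have hδ1 : δ r1.1 = u := hδr r1
    have h1 : γ u = β₁ u := stepA γ β₁ hγ hβ₁ hb10.symm u hu
    have h2 : β₁ u = δ (e r1.1) := by
      rw [← hδ1]
      calc β₁ (δ r1.1) = δ (β₁ r1.1) := congr_fun (hcomm β₁ hβ₁ δ hδ) r1.1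
        _ = δ (e r1.1) := by rw [hb11]
    have h3 : δ (e r1.1) = e r1.1 := congr_fun (he.2 δ hδ).2 r1.1
    have h4 : e u = e r1.1 := by
      rw [← hδ1]
      exact congr_fun (he.2 δ hδ).1 r1.1
    rw [h1, h2, h3, h4]
  -- conclusion
  intro β hβ γ hγ
  funext x
  show γ (β x) = e x
  have h1 : γ (β x) = e (β x) := main γ hγ (β x) (hA β hβ x)
  have h2 : e (β x) = e x := congr_fun (he.2 β hβ).1 x
  rw [h1, h2]
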